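/- In the polynomial ring ℂ[z₁, z₂, z₃, z₄] one has the identity ∑_{α = (α₁,α₂) ∈ {1,2,3,4}²} ∑_{β ∈ {1,2,3,4}^ℓ} z_{α₁} z_{α₂} · z_{β₁}⋯z_{β_ℓ} · ( pr_P(ω_{α₁ 5}) ∧ pr_P(ω_{α₂ 6}) ∧ ω^ε ) · ⟨ pr(e_{β₁})⋯pr(e_{β_ℓ}), v^ε ⟩ = (z₁ + εi·z₂)^{ℓ+2}. (This is the Fock-model identity establishing that the contraction of the restricted Kudla–Millson Schwartz form φ'_{2,ℓ} against ω^ε and v^ε equals (1/4πi)^{ℓ+2}(x₁+εix₂)^{ℓ+2} times the Gaussian.) -/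

import Mathlib

/-- The canonical generator `v₁ ∧ ⋯ ∧ vₙ` of the `n`-th exterior power, as an element of the
submodule `⋀[E]^n V` of the exterior algebra. -/
noncomputable def wedgeι (E : Type*) [CommRing E] {V : Type*} [AddCommGroup V] [Module E V]
    (n : ℕ) (v : Fin n → V) : ⋀[E]^n V :=
  ⟨ExteriorAlgebra.ιMulti E n v, ExteriorAlgebra.ιMulti_range E n (Set.mem_range_self v)⟩

/-- The basis `ω_{a5}, ω_{a6}` (`1 ≤ a ≤ 4`) of the 8-dimensional space `Ω`; the second index
`s ∈ Fin 2` records `5` or `6`. -/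
noncomputable def ωVec (a : Fin 4) (s : Fin 2) : Fin 4 × Fin 2 → ℂ := Pi.single (a, s) 1

/-- The basis `ω_{a5}, ω_{a6}` (`a ∈ {1,2}`) of the subspace `P`. -/
noncomputable def κVec (a : Fin 2) (s : Fin 2) : Fin 2 × Fin 2 → ℂ := Pi.single (a, s) 1

/-- The projection `pr_P : Ω → P` killing `ω_{a5}, ω_{a6}` for `a ∈ {3,4}`. -/
noncomputable def prP : (Fin 4 × Fin 2 → ℂ) →ₗ[ℂ] (Fin 2 × Fin 2 → ℂ) :=
  LinearMap.funLeft ℂ ℂ (fun p => (Fin.castLE (by norm_num) p.1, p.2))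

/-- The basis `e₁, …, e₄` of the 4-dimensional space `U`. -/
noncomputable def eU (a : Fin 4) : Fin 4 → ℂ := Pi.single a 1

/-- The projection `U → span(e₁,e₂)` killing `e₃, e₄`. -/
noncomputable def prS : (Fin 4 → ℂ) →ₗ[ℂ] (Fin 2 → ℂ) :=
  LinearMap.funLeft ℂ ℂ (Fin.castLE (by norm_num))

/-- The symmetric bilinear form with `⟨e_a, e_b⟩ = δ_{ab}` on `span(e₁,e₂)`. -/
def BS (u v : Fin 2 → ℂ) : ℂ := u 0 * v 0 + u 1 * v 1

/-- The basis vector `e₁ + εi·e₂` of `span(e₁,e₂)`. -/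
noncomputable def wVec (ε : ℂ) : Fin 2 → ℂ :=
  (Pi.single 0 1 : Fin 2 → ℂ) + (ε * Complex.I) • (Pi.single 1 1 : Fin 2 → ℂ)

/-! ### Auxiliary machinery -/

noncomputable def Beq : Fin 4 ≃ Fin 2 × Fin 2 :=
  Equiv.ofBijective ![(0,0),(1,0),(0,1),(1,1)] (by decide)

noncomputable def Bas : Module.Basis (Fin 4) ℂ (Fin 2 × Fin 2 → ℂ) :=
  (Pi.basisFun ℂ (Fin 2 × Fin 2)).reindex Beq.symm

lemma Bas_eq : (⇑Bas : Fin 4 → (Fin 2 × Fin 2 → ℂ)) = ![κVec 0 0, κVec 1 0, κVec 0 1, κVec 1 1] := by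
  funext i
  fin_cases i <;> simp [Bas, Beq, κVec, Equiv.ofBijective]

lemma det4 (p q r s t : ℂ) :
    Matrix.det !![p, 0, 1, 0; q, 0, t, 0; 0, r, 0, 1; 0, s, 0, t] = (q - p*t)*(r*t - s) := by
  simp [Matrix.det_succ_row_zero, Fin.sum_univ_succ, Fin.succAbove, Matrix.vecHead,
    Matrix.vecTail]
  ring

lemma Bas_det_eq (v : Fin 4 → (Fin 2 × Fin 2 → ℂ)) :
    Bas.det v = Matrix.det (Matrix.of fun i j => v j (Beq i)) := by
  rw [Module.Basis.det_apply]
  congr 1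

lemma hprPall (a : Fin 4) (s : Fin 2) :
    prP (ωVec a s) = ![κVec 0 s, κVec 1 s, 0, 0] a := by
  fin_cases a <;> fin_cases s <;>
    · funext p
      obtain ⟨x, y⟩ := p
      fin_cases x <;> fin_cases y <;>
        norm_num [prP, ωVec, κVec, Pi.single_apply, Prod.ext_iff, Fin.ext_iff, Matrix.vecHead,
          Matrix.vecTail, Function.comp]

lemma hmatgen (u0 u1 u2 u3 : Fin 2 × Fin 2 → ℂ) :
    (Matrix.of fun i j => ![u0,u1,u2,u3] j (Beq i)) =
    !![u0 (0,0), u1 (0,0), u2 (0,0), u3 (0,0);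
       u0 (1,0), u1 (1,0), u2 (1,0), u3 (1,0);
       u0 (0,1), u1 (0,1), u2 (0,1), u3 (0,1);
       u0 (1,1), u1 (1,1), u2 (1,1), u3 (1,1)] := by
  ext i j
  fin_cases i <;> fin_cases j <;> rfl

lemma hA (ε : ℂ) (a b : Fin 4) :
    Bas.det ![prP (ωVec a 0), prP (ωVec b 1),
      κVec 0 0 + (ε * Complex.I) • κVec 1 0,
      κVec 0 1 + (ε * Complex.I) • κVec 1 1] =
    ![-(ε*Complex.I), 1, 0, 0] a * ![ε*Complex.I, -1, 0, 0] b := by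
  simp only [hprPall]
  fin_cases a <;> fin_cases b <;>
    · rw [Bas_det_eq, hmatgen]
      norm_num [κVec, Pi.single_apply, Prod.ext_iff, Fin.ext_iff, Matrix.vecHead, Matrix.vecTail]
      rw [det4]
      ring

/-- The Fock-model identity: in `ℂ[z₁,…,z₄]`,
`∑_α ∑_β z_{α₁} z_{α₂} z_β · (pr_P(ω_{α₁5}) ∧ pr_P(ω_{α₂6}) ∧ ω^ε) · ⟨pr(e_{β₁})⋯pr(e_{β_ℓ}), v^ε⟩
 = (z₁ + εi·z₂)^{ℓ+2}`, where `⋀⁴P` is identified with `ℂ` via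
`ω₁₅∧ω₂₅∧ω₁₆∧ω₂₆ ↦ 1`, `ω^ε = (ω₁₅+εi·ω₂₅)∧(ω₁₆+εi·ω₂₆)`, and
`v^ε = (1/ℓ!)·(e₁+εi·e₂)^ℓ`. -/
theorem fock_model_contraction (ℓ : ℕ) (ε : ℂ) (hε : ε = 1 ∨ ε = -1)
    (d : ↥(⋀[ℂ]^4 (Fin 2 × Fin 2 → ℂ)) →ₗ[ℂ] ℂ)
    (hd : d (wedgeι ℂ 4 ![κVec 0 0, κVec 1 0, κVec 0 1, κVec 1 1]) = 1) :
    ∑ α : Fin 4 × Fin 4, ∑ β : Fin ℓ → Fin 4,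
      (MvPolynomial.X α.1 * MvPolynomial.X α.2 * ∏ j, MvPolynomial.X (β j)) *
        MvPolynomial.C
          (d (wedgeι ℂ 4 ![prP (ωVec α.1 0), prP (ωVec α.2 1),
              κVec 0 0 + (ε * Complex.I) • κVec 1 0,
              κVec 0 1 + (ε * Complex.I) • κVec 1 1]) *
            ((ℓ.factorial : ℂ)⁻¹ *
              ∑ σ : Equiv.Perm (Fin ℓ), ∏ j,
                BS (prS (eU (β j))) ((fun _ : Fin ℓ => wVec ε) (σ j)))) =
      (MvPolynomial.X 0 + MvPolynomial.C (ε * Complex.I) * MvPolynomial.X 1) ^ (ℓ + 2) := by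
  classical
  set x : MvPolynomial (Fin 4) ℂ :=
    MvPolynomial.X 0 + MvPolynomial.C (ε * Complex.I) * MvPolynomial.X 1 with hx
  -- the contraction `d ∘ wedgeι` is an alternating map, hence given by the determinant
  have key : ∀ v : Fin 4 → (Fin 2 × Fin 2 → ℂ), d (wedgeι ℂ 4 v) = Bas.det v := by
    set F : (Fin 2 × Fin 2 → ℂ) [⋀^Fin 4]→ₗ[ℂ] ℂ :=
      d.compAlternatingMap (AlternatingMap.codRestrict (ExteriorAlgebra.ιMulti ℂ 4)
        (⋀[ℂ]^4 (Fin 2 × Fin 2 → ℂ))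
        (fun w => ExteriorAlgebra.ιMulti_range ℂ 4 (Set.mem_range_self w))) with hF
    intro v
    have h1 : F = F ⇑Bas • Bas.det := F.eq_smul_basis_det Bas
    have h2 : F ⇑Bas = 1 := by rw [Bas_eq]; exact hd
    calc d (wedgeι ℂ 4 v) = F v := rfl
      _ = (F ⇑Bas • Bas.det) v := by rw [← h1]
      _ = Bas.det v := by rw [h2]; simp
  -- the coefficient from the `β`-sum
  have hβconst : ∀ β : Fin ℓ → Fin 4,
      ((ℓ.factorial : ℂ)⁻¹ *
        ∑ σ : Equiv.Perm (Fin ℓ), ∏ j, BS (prS (eU (β j))) ((fun _ : Fin ℓ => wVec ε) (σ j)))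
      = ∏ j, BS (prS (eU (β j))) (wVec ε) := by
    intro β
    have h0 : ∀ σ : Equiv.Perm (Fin ℓ),
        ∏ j, BS (prS (eU (β j))) ((fun _ : Fin ℓ => wVec ε) (σ j))
        = ∏ j, BS (prS (eU (β j))) (wVec ε) := fun σ => rfl
    rw [Finset.sum_congr rfl fun σ _ => h0 σ, Finset.sum_const, Finset.card_univ,
      Fintype.card_perm, Fintype.card_fin, nsmul_eq_mul, ← mul_assoc,
      inv_mul_cancel₀ (Nat.cast_ne_zero.2 ℓ.factorial_ne_zero), one_mul]
  -- split the double sum into a product of two sums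
  trans (∑ α : Fin 4 × Fin 4,
      MvPolynomial.X α.1 * MvPolynomial.X α.2 *
        MvPolynomial.C (d (wedgeι ℂ 4 ![prP (ωVec α.1 0), prP (ωVec α.2 1),
          κVec 0 0 + (ε * Complex.I) • κVec 1 0,
          κVec 0 1 + (ε * Complex.I) • κVec 1 1]))) *
    (∑ β : Fin ℓ → Fin 4, ∏ j,
      (MvPolynomial.X (β j) * MvPolynomial.C (BS (prS (eU (β j))) (wVec ε))))
  · rw [Finset.sum_mul_sum]
    refine Finset.sum_congr rfl fun α _ => Finset.sum_congr rfl fun β _ => ?_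
    rw [hβconst β, map_mul, map_prod, Finset.prod_mul_distrib]
    ring
  -- evaluate the two factors
  have hαsum : (∑ α : Fin 4 × Fin 4,
      MvPolynomial.X α.1 * MvPolynomial.X α.2 *
        MvPolynomial.C (d (wedgeι ℂ 4 ![prP (ωVec α.1 0), prP (ωVec α.2 1),
          κVec 0 0 + (ε * Complex.I) • κVec 1 0,
          κVec 0 1 + (ε * Complex.I) • κVec 1 1]))) = x ^ 2 := by
    simp only [key, hA]
    have hI2 : (MvPolynomial.C Complex.I : MvPolynomial (Fin 4) ℂ) * MvPolynomial.C Complex.I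
        = -1 := by rw [← map_mul, Complex.I_mul_I, map_neg, map_one]
    rcases hε with h | h <;> subst h <;>
      · rw [Fintype.sum_prod_type]
        simp [Fin.sum_univ_four, hx, map_mul, map_neg, map_one]
        linear_combination (-(MvPolynomial.X (0 : Fin 4)^2 + MvPolynomial.X (1 : Fin 4)^2)
          : MvPolynomial (Fin 4) ℂ) * hI2
  have hβsum : (∑ β : Fin ℓ → Fin 4, ∏ j,
      (MvPolynomial.X (β j) * MvPolynomial.C (BS (prS (eU (β j))) (wVec ε)))) = x ^ ℓ := by
    rw [← Fintype.sum_pow (fun a : Fin 4 =>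
      MvPolynomial.X a * MvPolynomial.C (BS (prS (eU a)) (wVec ε))) ℓ]
    have hc : ∀ a : Fin 4, BS (prS (eU a)) (wVec ε) = ![1, ε*Complex.I, 0, 0] a := by
      intro a
      fin_cases a <;>
        norm_num [BS, prS, eU, wVec, Pi.single_apply, Fin.ext_iff, Matrix.vecHead,
          Matrix.vecTail, Function.comp]
    simp only [hc]
    rw [Fin.sum_univ_four]
    have h2 : (![1, ε*Complex.I, 0, 0] : Fin 4 → ℂ) 2 = 0 := rfl
    have h3 : (![1, ε*Complex.I, 0, 0] : Fin 4 → ℂ) 3 = 0 := rfl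
    norm_num [hx, Matrix.vecHead, Matrix.vecTail, h2, h3]
    ring
  rw [hαsum, hβsum]
  ring
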